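/- Let k ≥ 1 and let G be a finite connected simple graph. Let H be the simple graph on the vertex set V(G) × {1,…,k} in which (u,i) and (u,j) are adjacent whenever i ≠ j (each set {u} × {1,…,k} is a clique K_u), and for distinct u,v ∈ V(G), (u,i) and (v,j) are adjacent if and only if uv is an edge of G and i ≠ j (each edge of G is replaced by an antimatching between K_u and K_v); there are no other edges. Then every proper k-coloring c of H satisfies c(u,i) = c(v,i) for all u,v ∈ V(G) and all i ∈ {1,…,k}. -/

import Mathlib

/-- The graph on `V × Fin k` in which each set `{u} × Fin k` is a clique, and each edge
`uv` of `G` is replaced by an antimatching: `(u,i)` and `(v,j)` are adjacent iff `i ≠ j`. -/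
def antimatchingGraph {V : Type*} (G : SimpleGraph V) (k : ℕ) :
    SimpleGraph (V × Fin k) where
  Adj x y := x.2 ≠ y.2 ∧ (x.1 = y.1 ∨ G.Adj x.1 y.1)
  symm := by
    constructor
    rintro x y ⟨h1, h2⟩
    exact ⟨h1.symm, h2.elim (fun h => Or.inl h.symm) (fun h => Or.inr (G.adj_symm h))⟩
  loopless := by
    constructor
    rintro x ⟨h, -⟩
    exact h rfl

/-- Let `k ≥ 1` and let `G` be a finite connected simple graph. In every proper
`k`-coloring of the antimatching graph of `G`, the vertices `(u, i)` and `(v, i)` receive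
the same color, for all `u, v` and all `i`. -/
theorem antimatchingGraph_coloring_eq {V : Type*} [Fintype V]
    (k : ℕ) (hk : 1 ≤ k) (G : SimpleGraph V) (hG : G.Connected)
    (c : (antimatchingGraph G k).Coloring (Fin k)) (u v : V) (i : Fin k) :
    c (u, i) = c (v, i) := by
  have key : ∀ u v : V, G.Adj u v → ∀ i : Fin k, c (u, i) = c (v, i) := by
    intro u v huv i
    by_contra hne
    have hinj : Function.Injective (fun j : Fin k => c (v, j)) := by
      intro a b hab
      by_contra h
      exact c.valid (show (antimatchingGraph G k).Adj (v,a) (v,b) from ⟨h, Or.inl rfl⟩) hab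
    obtain ⟨j, hj⟩ := (Finite.injective_iff_surjective.mp hinj) (c (u, i))
    have hij : i ≠ j := by rintro rfl; exact hne hj.symm
    exact c.valid (show (antimatchingGraph G k).Adj (u,i) (v,j) from ⟨hij, Or.inr huv⟩) hj.symm
  obtain ⟨w⟩ := hG.preconnected u v
  induction w with
  | nil => rfl
  | cons h p ih => exact (key _ _ h i).trans ih
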